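/- Let V be a finite set with |V| = n and let w assign a nonnegative real weight w(u,v) = w(v,u) to each unordered pair of distinct vertices of V. For nonempty S ⊆ V define the weighted degree deg_w(u, S) = Σ_{v ∈ S, v ≠ u} w(u,v) and the weighted average density d_a^w(S) = (1/|S|)·Σ_{u ∈ S} deg_w(u, S). Let S_0 = V and, for i = 1, …, n−1, let S_i = S_{i-1} \ {v_i} where v_i attains the minimum of deg_w(·, S_{i-1}) over S_{i-1}. Then max_{0 ≤ i ≤ n−1} d_a^w(S_i) ≥ (1/2)·max_{∅ ≠ S ⊆ V} d_a^w(S). -/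
import Mathlib


open Finset

/-- The weighted degree `deg_w(u, S) = Σ_{v ∈ S, v ≠ u} w u v`. -/
noncomputable def wdeg {n : ℕ} (w : Fin n → Fin n → ℝ) (S : Finset (Fin n)) (u : Fin n) : ℝ :=
  ∑ x ∈ S.erase u, w u x

/-- The weighted average density `d_a^w(S) = (1/|S|) · Σ_{u ∈ S} deg_w(u, S)`. -/
noncomputable def wavg {n : ℕ} (w : Fin n → Fin n → ℝ) (S : Finset (Fin n)) : ℝ :=
  (1 / (S.card : ℝ)) * ∑ u ∈ S, wdeg w S u

lemma wdeg_nonneg {n : ℕ} (w : Fin n → Fin n → ℝ) (hnonneg : ∀ u v, 0 ≤ w u v)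
    (S : Finset (Fin n)) (u : Fin n) : 0 ≤ wdeg w S u :=
  Finset.sum_nonneg fun x _ => hnonneg u x

lemma wdeg_mono {n : ℕ} (w : Fin n → Fin n → ℝ) (hnonneg : ∀ u v, 0 ≤ w u v)
    {S T : Finset (Fin n)} (h : S ⊆ T) (u : Fin n) : wdeg w S u ≤ wdeg w T u :=
  Finset.sum_le_sum_of_subset_of_nonneg (Finset.erase_subset_erase _ h)
    (fun x _ _ => hnonneg u x)

lemma wavg_nonneg {n : ℕ} (w : Fin n → Fin n → ℝ) (hnonneg : ∀ u v, 0 ≤ w u v)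
    (S : Finset (Fin n)) : 0 ≤ wavg w S :=
  mul_nonneg (by positivity) (Finset.sum_nonneg fun u _ => wdeg_nonneg w hnonneg S u)

/-- In an optimal set, every vertex has weighted degree at least half the average density. -/
lemma opt_deg {n : ℕ} (w : Fin n → Fin n → ℝ)
    (hsymm : ∀ u v, w u v = w v u) (hnonneg : ∀ u v, 0 ≤ w u v)
    (T : Finset (Fin n)) (hT : T.Nonempty)
    (hopt : ∀ S' : Finset (Fin n), S'.Nonempty → wavg w S' ≤ wavg w T)
    {u : Fin n} (hu : u ∈ T) : wavg w T ≤ 2 * wdeg w T u := by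
  by_cases hk : T.card = 1
  · have hTu : T = {u} := by
      obtain ⟨a, ha⟩ := Finset.card_eq_one.1 hk
      subst ha
      simpa using (Finset.mem_singleton.1 hu).symm ▸ rfl
    subst hTu
    simp [wavg, wdeg]
  · have hk2 : 2 ≤ T.card := by
      have := hT.card_pos; omega
    set T' := T.erase u with hT'def
    have hT'card : T'.card = T.card - 1 := Finset.card_erase_of_mem hu
    have hT' : T'.Nonempty := Finset.card_pos.1 (by omega)
    have h1 : ∀ x ∈ T', wdeg w T' x = wdeg w T x - w x u := by
      intro x hx
      have hxu : x ≠ u := Finset.ne_of_mem_erase hx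
      have he : T'.erase x = (T.erase x).erase u := by
        rw [hT'def]; exact Finset.erase_right_comm
      unfold wdeg
      rw [he, Finset.sum_erase_eq_sub (Finset.mem_erase.2 ⟨hxu.symm, hu⟩)]
    have h2 : ∑ x ∈ T', w x u = wdeg w T u := by
      unfold wdeg
      exact Finset.sum_congr rfl fun x _ => hsymm x u
    have key : ∑ x ∈ T', wdeg w T' x = (∑ x ∈ T, wdeg w T x) - 2 * wdeg w T u := by
      rw [Finset.sum_congr rfl h1, Finset.sum_sub_distrib, h2,
        Finset.sum_erase_eq_sub hu]
      ring
    have hineq := hopt T' hT'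
    unfold wavg at hineq ⊢
    rw [key, hT'card] at hineq
    set D := ∑ x ∈ T, wdeg w T x
    set d := wdeg w T u
    set k : ℝ := (T.card : ℝ) with hkdef
    have hkR : (2 : ℝ) ≤ k := by rw [hkdef]; exact_mod_cast hk2
    have hcast : ((T.card - 1 : ℕ) : ℝ) = k - 1 := by
      push_cast [Nat.cast_sub (by omega : 1 ≤ T.card)]; ring
    rw [hcast] at hineq
    rw [one_div, inv_mul_eq_div, div_le_iff₀ (by linarith : (0:ℝ) < k)]
    rw [one_div, one_div, inv_mul_eq_div, inv_mul_eq_div,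
      div_le_div_iff₀ (by linarith : (0:ℝ) < k - 1) (by linarith : (0:ℝ) < k)] at hineq
    nlinarith

/-- Weighted-graph greedy peeling guarantee (Charikar-style): iteratively
removing a vertex of minimum weighted degree yields, for some set in the chain, a weighted
average density at least half of the optimum over all nonempty subsets. -/
theorem weighted_greedy_peeling_half_approx {n : ℕ} (hn : 0 < n)
    (w : Fin n → Fin n → ℝ)
    (hsymm : ∀ u v, w u v = w v u) (hnonneg : ∀ u v, 0 ≤ w u v)
    (S : ℕ → Finset (Fin n)) (v : ℕ → Fin n)
    (h0 : S 0 = Finset.univ)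
    (hstep : ∀ i < n - 1, v i ∈ S i ∧ S (i + 1) = S i \ {v i} ∧
      ∀ u ∈ S i, wdeg w (S i) (v i) ≤ wdeg w (S i) u) :
    ∃ i < n, (S i).Nonempty ∧
      ∀ S' : Finset (Fin n), S'.Nonempty → (1 / 2) * wavg w S' ≤ wavg w (S i) := by
  classical
  haveI : Nonempty (Fin n) := ⟨⟨0, hn⟩⟩
  -- cardinalities along the chain
  have hcard : ∀ i ≤ n - 1, (S i).card = n - i := by
    intro i
    induction i with
    | zero => intro _; simp [h0]
    | succ i ih =>
      intro h
      obtain ⟨hv, hS, _⟩ := hstep i (by omega)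
      rw [hS, ← Finset.erase_eq, Finset.card_erase_of_mem hv, ih (by omega)]
      omega
  have hne : ∀ i ≤ n - 1, (S i).Nonempty := fun i hi =>
    Finset.card_pos.1 (by rw [hcard i hi]; omega)
  -- a maximizer T of wavg over nonempty subsets
  obtain ⟨T, hTmem, hTmax⟩ := Finset.exists_max_image
    ((Finset.univ : Finset (Fin n)).powerset.filter (fun t => t.Nonempty)) (wavg w)
    ⟨Finset.univ, by simp [Finset.univ_nonempty]⟩
  have hTne : T.Nonempty := (Finset.mem_filter.1 hTmem).2
  have hopt : ∀ S' : Finset (Fin n), S'.Nonempty → wavg w S' ≤ wavg w T := by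
    intro S' hS'
    exact hTmax S' (Finset.mem_filter.2 ⟨Finset.mem_powerset.2 (Finset.subset_univ _), hS'⟩)
  by_cases hall : ∀ i ≤ n - 1, T ⊆ S i
  · -- T survives the whole chain, so T is the last (singleton) set
    have h1 : (S (n - 1)).card = 1 := by rw [hcard _ le_rfl]; omega
    have hTS : T = S (n - 1) :=
      Finset.eq_of_subset_of_card_le (hall _ le_rfl) (by rw [h1]; exact hTne.card_pos)
    refine ⟨n - 1, by omega, hne _ le_rfl, ?_⟩
    intro S' hS'
    have h2 := hopt S' hS'
    have h3 : 0 ≤ wavg w S' := wavg_nonneg w hnonneg S'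
    rw [← hTS]
    linarith
  · push_neg at hall
    obtain ⟨i, hile, hiT⟩ := hall
    have hex : ∃ m, ¬ T ⊆ S m := ⟨i, hiT⟩
    set i0 := Nat.find hex with hi0def
    have hi0 : ¬ T ⊆ S i0 := Nat.find_spec hex
    have hminprop : ∀ m < i0, T ⊆ S m := fun m hm => not_not.1 (Nat.find_min hex hm)
    have hi0pos : 0 < i0 := by
      rcases Nat.eq_zero_or_pos i0 with h | h
      · exfalso; apply hi0; rw [h, h0]; exact Finset.subset_univ T
      · exact h
    have hi0le : i0 ≤ n - 1 := le_trans (Nat.find_le hiT) hile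
    set j := i0 - 1 with hjdef
    have hjlt : j < n - 1 := by omega
    obtain ⟨hv, hSsucc, hmin⟩ := hstep j hjlt
    have hTj : T ⊆ S j := hminprop j (by omega)
    have hj1 : j + 1 = i0 := by omega
    have hvT : v j ∈ T := by
      by_contra hvnot
      apply hi0
      rw [← hj1, hSsucc]
      intro x hx
      exact Finset.mem_sdiff.2 ⟨hTj hx, by
        simp only [Finset.mem_singleton]
        rintro rfl; exact hvnot hx⟩
    -- every vertex of S j has weighted degree at least wavg w T / 2
    have hdeg : ∀ u ∈ S j, wavg w T ≤ 2 * wdeg w (S j) u := by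
      intro u hu
      have h1 := opt_deg w hsymm hnonneg T hTne hopt hvT
      have h2 := wdeg_mono w hnonneg hTj (v j)
      have h3 := hmin u hu
      linarith
    have hjne : (S j).Nonempty := hne j (by omega)
    have hsum : ((S j).card : ℝ) * (wavg w T / 2) ≤ ∑ u ∈ S j, wdeg w (S j) u := by
      calc ((S j).card : ℝ) * (wavg w T / 2)
          = ∑ _u ∈ S j, wavg w T / 2 := by rw [Finset.sum_const, nsmul_eq_mul]
        _ ≤ ∑ u ∈ S j, wdeg w (S j) u :=
            Finset.sum_le_sum fun u hu => by linarith [hdeg u hu]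
    have hcpos : (0 : ℝ) < ((S j).card : ℝ) := by exact_mod_cast hjne.card_pos
    refine ⟨j, by omega, hjne, ?_⟩
    intro S' hS'
    have h2 := hopt S' hS'
    have h3 : wavg w T / 2 ≤ wavg w (S j) := by
      show wavg w T / 2 ≤ (1 / ((S j).card : ℝ)) * ∑ u ∈ S j, wdeg w (S j) u
      rw [one_div, inv_mul_eq_div, le_div_iff₀ hcpos]
      calc wavg w T / 2 * ((S j).card : ℝ)
          = ((S j).card : ℝ) * (wavg w T / 2) := by ring
        _ ≤ _ := hsum
    linarith
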